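/- Let C = {c₁, ..., cₙ} be a chain 0 = c₁ < c₂ < ... < cₙ = 1 with n ≥ 3. Define: 0 ⊙ cᵢ = cᵢ ⊙ 0 = 0, 1 ⊙ cᵢ = cᵢ ⊙ 1 = cᵢ, 0 → cᵢ = cᵢ → 1 = 1, cᵢ → 0 = cₙ₊₁₋ᵢ, 1 → cᵢ = cᵢ, and for 2 ≤ i, j ≤ n−1: cᵢ ⊙ cⱼ = 0 if i + j ≤ n + 1 else c₂, and cᵢ → cⱼ = 1 if i ≤ j else cₙ₋₁. Then (C, ≤, ⊙, →, 1) is a residuated lattice in which x' := x → 0 is an antitone involution. -/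

import Mathlib

/-- The monoid operation on the chain 0 = c₁ < ... < cₙ = 1 (here realized as
`Fin n`, with cᵢ corresponding to index i - 1): 0 ⊙ x = x ⊙ 0 = 0,
1 ⊙ x = x ⊙ 1 = x, and for 2 ≤ i, j ≤ n - 1, cᵢ ⊙ cⱼ = 0 if i + j ≤ n + 1,
else c₂. -/
def cmul {n : ℕ} (hn : 3 ≤ n) (a b : Fin n) : Fin n :=
  if a.val = 0 ∨ b.val = 0 then ⟨0, by omega⟩
  else if a.val = n - 1 then b
  else if b.val = n - 1 then a
  else if (a.val + 1) + (b.val + 1) ≤ n + 1 then ⟨0, by omega⟩ else ⟨1, by omega⟩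

/-- The residuum on the chain: 0 → x = x → 1 = 1, cᵢ → 0 = cₙ₊₁₋ᵢ, 1 → x = x,
and for 2 ≤ i, j ≤ n - 1, cᵢ → cⱼ = 1 if i ≤ j, else cₙ₋₁. -/
def cimp {n : ℕ} (hn : 3 ≤ n) (a b : Fin n) : Fin n :=
  if a.val = 0 ∨ b.val = n - 1 then ⟨n - 1, by omega⟩
  else if b.val = 0 then ⟨n - 1 - a.val, by omega⟩
  else if a.val = n - 1 then b
  else if a.val ≤ b.val then ⟨n - 1, by omega⟩ else ⟨n - 2, by omega⟩

set_option maxHeartbeats 1000000 in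
/-- The chain with n ≥ 3 elements and the above operations is a residuated
lattice in which x' := x → 0 is an antitone involution. -/
theorem stmt11 {n : ℕ} (hn : 3 ≤ n) :
    (∀ x : Fin n, x ≤ ⟨n - 1, by omega⟩) ∧
    (∀ x y : Fin n, cmul hn x y = cmul hn y x) ∧
    (∀ x y z : Fin n, cmul hn (cmul hn x y) z = cmul hn x (cmul hn y z)) ∧
    (∀ x : Fin n, cmul hn x ⟨n - 1, by omega⟩ = x) ∧
    (∀ x y z : Fin n, cmul hn x y ≤ z ↔ x ≤ cimp hn y z) ∧
    (∀ x : Fin n, cimp hn (cimp hn x ⟨0, by omega⟩) ⟨0, by omega⟩ = x) ∧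
    (∀ x y : Fin n, x ≤ y → cimp hn y ⟨0, by omega⟩ ≤ cimp hn x ⟨0, by omega⟩) := by
  refine ⟨?_, ?_, ?_, ?_, ?_, ?_, ?_⟩
  · intro x; simp only [Fin.le_def]; omega
  · intro x y
    simp only [cmul, Fin.ext_iff]
    split_ifs <;> simp -failIfUnchanged only [Fin.val_mk, false_or, or_false] at * <;> omega
  · intro x y z
    simp only [cmul, Fin.ext_iff]
    split_ifs <;> simp only [Fin.val_mk, false_or, or_false] at * <;> omega
  · intro x
    simp only [cmul, Fin.ext_iff]
    split_ifs <;> simp only [Fin.val_mk, false_or, or_false] at * <;> omega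
  · intro x y z
    simp only [cmul, cimp, Fin.le_def, Fin.ext_iff]
    split_ifs <;> simp -failIfUnchanged only [Fin.val_mk, false_or, or_false] at * <;> omega
  · intro x
    simp only [cimp, Fin.ext_iff]
    split_ifs <;> simp only [Fin.val_mk, false_or, or_false] at * <;> omega
  · intro x y h
    simp only [Fin.le_def] at h
    simp only [cimp, Fin.le_def]
    split_ifs <;> simp only [Fin.val_mk, false_or, or_false] at * <;> omega
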